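/- Let n and m be natural numbers such that n + 4 ≤ 3m, n ≥ 11, and n − m ≥ 1. Then, as real numbers, |(L_{n+2} − 3)/L_m − L_{n−m+2}| < 1. -/

import Mathlib

/-- The Lucas numbers: L 0 = 2, L 1 = 1, L (n+2) = L (n+1) + L n. -/
def lucas : ℕ → ℕ
  | 0 => 2
  | 1 => 1
  | n + 2 => lucas n + lucas (n + 1)

lemma lucas_pos : ∀ k, 0 < lucas k
  | 0 => by simp [lucas]
  | 1 => by simp [lucas]
  | n + 2 => by
    have := lucas_pos n
    simp only [lucas]
    omega

lemma lucas_succ_le (c : ℕ) : lucas (c + 1) ≤ lucas (c + 2) := by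
  show lucas (c+1) ≤ lucas c + lucas (c+1)
  exact Nat.le_add_left _ _

lemma lucas_mono1 (a b : ℕ) (ha : 1 ≤ a) (hab : a ≤ b) : lucas a ≤ lucas b := by
  induction b, hab using Nat.le_induction with
  | base => exact le_refl _
  | succ c hc ih =>
    obtain ⟨d, rfl⟩ : ∃ d, c = d + 1 := ⟨c - 1, by omega⟩
    exact le_trans ih (lucas_succ_le d)

lemma lucas_le_of_le (i j : ℕ) (hj : 2 ≤ j) (hij : i ≤ j) : lucas i ≤ lucas j := by
  match i with
  | 0 =>
    have : lucas 2 ≤ lucas j := lucas_mono1 2 j (by omega) hj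
    simp [lucas] at this ⊢
    omega
  | i + 1 => exact lucas_mono1 (i+1) j (by omega) hij

lemma lucas_add : ∀ (b a : ℕ), b ≤ a →
    (lucas (a + b) : ℤ) = lucas a * lucas b - (-1)^b * lucas (a - b)
  | 0, a, _ => by simp [lucas]; ring
  | 1, a, h => by
    obtain ⟨c, rfl⟩ : ∃ c, a = c + 1 := ⟨a - 1, by omega⟩
    show (lucas (c + 2) : ℤ) = _
    simp [lucas]
    ring
  | (b + 2), a, h => by
    have h1 : b ≤ a := by omega
    have h2 : b + 1 ≤ a := by omega
    have ih1 := lucas_add b a h1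
    have ih2 := lucas_add (b + 1) a h2
    have e1 : a + (b + 2) = (a + b) + 2 := by ring
    have e2 : (lucas ((a+b)+2) : ℤ) = lucas (a+b) + lucas (a+b+1) := by
      simp [lucas]
    have e3 : (lucas (b+2) : ℤ) = lucas b + lucas (b+1) := by
      simp [lucas]
    have e4 : a - b = (a - (b+2)) + 2 := by omega
    have e5 : (lucas (a - b) : ℤ) = lucas (a - (b+2)) + lucas (a - (b+2) + 1) := by
      rw [e4]; simp [lucas]
    have e6 : a - (b+1) = a - (b+2) + 1 := by omega
    have e7 : a + b + 1 = a + (b + 1) := by omega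
    rw [e1, e2, e7, ih1, ih2, e3, e5, e6]
    ring

lemma key (n m : ℕ) (h1 : n + 4 ≤ 3 * m) (h2 : 11 ≤ n) (h3 : m + 1 ≤ n) :
    |(lucas (n + 2) : ℤ) - 3 - lucas (n - m + 2) * lucas m| < lucas m := by
  have hm5 : 5 ≤ m := by omega
  set k := n - m with hk
  have hn : n = m + k := by omega
  -- in both cases, lucas (n+2) - lucas (k+2) * lucas m = ε * lucas d, d ≤ m - 2
  have main : ∃ (ε : ℤ) (d : ℕ), |ε| = 1 ∧ d ≤ m - 2 ∧
      (lucas (n + 2) : ℤ) - lucas (k + 2) * lucas m = ε * lucas d := by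
    rcases le_or_gt m (k + 2) with hcase | hcase
    · refine ⟨-(-1)^m, k + 2 - m, by simp, by omega, ?_⟩
      have := lucas_add m (k + 2) hcase
      have e : n + 2 = (k + 2) + m := by omega
      rw [e, this]; ring
    · refine ⟨-(-1)^(k+2), m - (k + 2), by simp, by omega, ?_⟩
      have := lucas_add (k + 2) m (by omega)
      have e : n + 2 = m + (k + 2) := by omega
      rw [e, this]; ring
  obtain ⟨ε, d, hε, hd, heq⟩ := main
  have hbound : (lucas d : ℤ) ≤ lucas (m - 2) :=
    Int.ofNat_le.mpr (lucas_le_of_le d (m - 2) (by omega) hd)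
  have hsplit : m = (m - 2) + 2 := by omega
  have hLm : (lucas m : ℤ) = lucas (m - 2) + lucas (m - 1) := by
    rw [hsplit]
    have e : m - 2 + 2 - 1 = m - 2 + 1 := by omega
    simp [lucas, e]
  have hLm1 : (7 : ℤ) ≤ lucas (m - 1) := by
    have : lucas 4 ≤ lucas (m - 1) := lucas_mono1 4 (m - 1) (by omega) (by omega)
    have h4 : lucas 4 = 7 := by decide
    omega
  calc |(lucas (n + 2) : ℤ) - 3 - lucas (n - m + 2) * lucas m|
      = |ε * lucas d - 3| := by rw [← heq, ← hk]; ring_nf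
    _ ≤ |ε * lucas d| + |(3 : ℤ)| := abs_sub _ _
    _ = lucas d + 3 := by
        rw [abs_mul, hε, one_mul, abs_of_nonneg (show (0:ℤ) ≤ (lucas d : ℤ) by positivity)]
        norm_num
    _ < lucas m := by omega

theorem lucas_ratio_close_to_lucas (n m : ℕ)
    (h1 : n + 4 ≤ 3 * m) (h2 : 11 ≤ n) (h3 : m + 1 ≤ n) :
    |((lucas (n + 2) : ℝ) - 3) / (lucas m : ℝ) - (lucas (n - m + 2) : ℝ)| < 1 := by
  have hLm : (0 : ℝ) < lucas m := by exact_mod_cast lucas_pos m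
  have hrw : ((lucas (n + 2) : ℝ) - 3) / (lucas m : ℝ) - (lucas (n - m + 2) : ℝ)
      = ((lucas (n + 2) : ℝ) - 3 - lucas (n - m + 2) * lucas m) / lucas m := by
    field_simp
  rw [hrw, abs_div, abs_of_pos hLm, div_lt_one hLm]
  exact_mod_cast key n m h1 h2 h3
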